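/- Let V be a finite-dimensional real vector space. If a continuous linear functional λ on C⁰([a,b],V*) vanishes identically on the subspace C⁰₀([a,b],V*) of functions vanishing at the endpoints, then there exist σ_a, σ_b ∈ V such that λ = δ_a^{σ_a} + δ_b^{σ_b}, where δ_t^σ(α) = α(t)(σ). -/

import Mathlib

/-- if a continuous linear functional `λ` on `C⁰([a,b],V*)` vanishes on
the subspace `C⁰₀([a,b],V*)` of functions vanishing at the endpoints, then
`λ = δ_a^{σ_a} + δ_b^{σ_b}` for some `σ_a, σ_b ∈ V`, where `δ_t^σ(α) = α(t)(σ)`. -/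
theorem functional_vanishing_on_C00_is_dirac
    (V : Type*) [NormedAddCommGroup V] [NormedSpace ℝ V] [FiniteDimensional ℝ V]
    (a b : ℝ) (hab : a < b)
    (lam : (ℝ → (V →L[ℝ] ℝ)) → ℝ)
    (hadd : ∀ α β : ℝ → (V →L[ℝ] ℝ), Continuous α → Continuous β →
      lam (α + β) = lam α + lam β)
    (hsmul : ∀ (c : ℝ) (α : ℝ → (V →L[ℝ] ℝ)), Continuous α → lam (c • α) = c * lam α)
    (hbound : ∃ C : ℝ, ∀ (α : ℝ → (V →L[ℝ] ℝ)) (K : ℝ), Continuous α →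
      (∀ t ∈ Set.Icc a b, ‖α t‖ ≤ K) → |lam α| ≤ C * K)
    (hvan : ∀ α : ℝ → (V →L[ℝ] ℝ), Continuous α → α a = 0 → α b = 0 → lam α = 0) :
    ∃ σa σb : V, ∀ α : ℝ → (V →L[ℝ] ℝ), Continuous α →
      lam α = α a σa + α b σb := by
  have hba : b - a ≠ 0 := sub_ne_zero.2 (ne_of_gt hab)
  -- affine interpolation
  set aff : (V →L[ℝ] ℝ) → (V →L[ℝ] ℝ) → ℝ → (V →L[ℝ] ℝ) :=
    fun φ ψ t => ((b - t) / (b - a)) • φ + ((t - a) / (b - a)) • ψ with haff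
  have caff : ∀ φ ψ, Continuous (aff φ ψ) := by
    intro φ ψ
    exact (((continuous_const.sub continuous_id).div_const _).smul continuous_const).add
      (((continuous_id.sub continuous_const).div_const _).smul continuous_const)
  have aff_a : ∀ φ ψ, aff φ ψ a = φ := by
    intro φ ψ; simp [haff, div_self hba]
  have aff_b : ∀ φ ψ, aff φ ψ b = ψ := by
    intro φ ψ; simp [haff, div_self hba]
  -- lam depends only on endpoint values
  have key : ∀ α : ℝ → (V →L[ℝ] ℝ), Continuous α → lam α = lam (aff (α a) (α b)) := by
    intro α hα
    have hc : Continuous (aff (α a) (α b)) := caff _ _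
    have h1 : Continuous (α + (-1 : ℝ) • aff (α a) (α b)) := by
      exact hα.add ((hc.const_smul (-1:ℝ) : Continuous fun t => ((-1:ℝ) • aff (α a) (α b) t)))
    have hv : lam (α + (-1 : ℝ) • aff (α a) (α b)) = 0 := by
      apply hvan _ h1
      · simp [aff_a, neg_one_smul ℝ (α a)]
      · simp [aff_b, neg_one_smul ℝ (α b)]
    have := hadd (α + (-1 : ℝ) • aff (α a) (α b)) (aff (α a) (α b)) h1 hc
    have hneg : lam ((-1 : ℝ) • aff (α a) (α b)) = -lam (aff (α a) (α b)) := by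
      rw [hsmul _ _ hc]; ring
    have heq : (α + (-1 : ℝ) • aff (α a) (α b)) + aff (α a) (α b) = α := by
      funext t; simp; module
    rw [heq] at this
    rw [this, hv]
    ring
  -- split aff into two pieces
  have aff_split : ∀ φ ψ, aff φ ψ = aff φ 0 + aff 0 ψ := by
    intro φ ψ; funext t; simp [haff]
  have lam_aff : ∀ φ ψ, lam (aff φ ψ) = lam (aff φ 0) + lam (aff 0 ψ) := by
    intro φ ψ
    rw [aff_split]; exact hadd _ _ (caff _ _) (caff _ _)
  -- linearity of φ ↦ lam (aff φ 0)
  have Fadd : ∀ φ φ', lam (aff (φ + φ') 0) = lam (aff φ 0) + lam (aff φ' 0) := by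
    intro φ φ'
    have : aff (φ + φ') 0 = aff φ 0 + aff φ' 0 := by
      funext t; simp [haff, smul_add]
    rw [this]; exact hadd _ _ (caff _ _) (caff _ _)
  have Fsmul : ∀ (c : ℝ) φ, lam (aff (c • φ) 0) = c * lam (aff φ 0) := by
    intro c φ
    have : aff (c • φ) 0 = c • (aff φ 0) := by
      funext t; simp [haff, smul_smul, mul_comm]
    rw [this]; exact hsmul _ _ (caff _ _)
  have Gadd : ∀ ψ ψ', lam (aff 0 (ψ + ψ')) = lam (aff 0 ψ) + lam (aff 0 ψ') := by
    intro ψ ψ'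
    have : aff 0 (ψ + ψ') = aff 0 ψ + aff 0 ψ' := by
      funext t; simp [haff, smul_add]
    rw [this]; exact hadd _ _ (caff _ _) (caff _ _)
  have Gsmul : ∀ (c : ℝ) ψ, lam (aff 0 (c • ψ)) = c * lam (aff 0 ψ) := by
    intro c ψ
    have : aff 0 (c • ψ) = c • (aff 0 ψ) := by
      funext t; simp [haff, smul_smul, mul_comm]
    rw [this]; exact hsmul _ _ (caff _ _)
  -- package as linear functionals on the algebraic dual
  let F : Module.Dual ℝ V →ₗ[ℝ] ℝ :=
    { toFun := fun f => lam (aff (LinearMap.toContinuousLinearMap f) 0)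
      map_add' := fun f g => by rw [map_add]; exact Fadd _ _
      map_smul' := fun c f => by rw [map_smul, Fsmul]; rfl }
  let G : Module.Dual ℝ V →ₗ[ℝ] ℝ :=
    { toFun := fun f => lam (aff 0 (LinearMap.toContinuousLinearMap f))
      map_add' := fun f g => by rw [map_add]; exact Gadd _ _
      map_smul' := fun c f => by rw [map_smul, Gsmul]; rfl }
  refine ⟨(Module.evalEquiv ℝ V).symm F, (Module.evalEquiv ℝ V).symm G, ?_⟩
  intro α hα
  have hFa : (α a : V →L[ℝ] ℝ) ((Module.evalEquiv ℝ V).symm F) = lam (aff (α a) 0) := by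
    have h := Module.apply_evalEquiv_symm_apply ℝ V ((α a : V →L[ℝ] ℝ) : V →ₗ[ℝ] ℝ) F
    have h2 : LinearMap.toContinuousLinearMap (((α a : V →L[ℝ] ℝ) : V →ₗ[ℝ] ℝ)) = α a := by
      ext v; simp
    calc (α a) ((Module.evalEquiv ℝ V).symm F)
        = (((α a : V →L[ℝ] ℝ) : V →ₗ[ℝ] ℝ)) ((Module.evalEquiv ℝ V).symm F) := rfl
      _ = F (((α a : V →L[ℝ] ℝ) : V →ₗ[ℝ] ℝ)) := h
      _ = lam (aff (α a) 0) := by simp only [F, LinearMap.coe_mk, AddHom.coe_mk, h2]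
  have hGb : (α b : V →L[ℝ] ℝ) ((Module.evalEquiv ℝ V).symm G) = lam (aff 0 (α b)) := by
    have h := Module.apply_evalEquiv_symm_apply ℝ V ((α b : V →L[ℝ] ℝ) : V →ₗ[ℝ] ℝ) G
    have h2 : LinearMap.toContinuousLinearMap (((α b : V →L[ℝ] ℝ) : V →ₗ[ℝ] ℝ)) = α b := by
      ext v; simp
    calc (α b) ((Module.evalEquiv ℝ V).symm G)
        = (((α b : V →L[ℝ] ℝ) : V →ₗ[ℝ] ℝ)) ((Module.evalEquiv ℝ V).symm G) := rfl
      _ = G (((α b : V →L[ℝ] ℝ) : V →ₗ[ℝ] ℝ)) := h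
      _ = lam (aff 0 (α b)) := by simp only [G, LinearMap.coe_mk, AddHom.coe_mk, h2]
  rw [key α hα, lam_aff, hFa, hGb]
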